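/- Let α, γ be real numbers with γ not an integer. Then for all real t: ₁F₁(α; γ; t) · ₁F₁(1−α; 1−γ; −t) − ( (γ−α) t / ( γ(γ−1) ) ) · ₁F₁(1−α; 2−γ; −t) · ₁F₁(α; γ+1; t) = 1. -/

import Mathlib

open Finset

/-- Pochhammer symbol `(a)ₙ = a(a+1)⋯(a+n-1)` for natural `n`. -/
noncomputable def poch (a : ℝ) (n : ℕ) : ℝ := Polynomial.eval a (ascPochhammer ℝ n)

/-- Pochhammer symbol `(a)ₖ` for integer `k`: for `k ≥ 0` the ascending product,
and `(a)₋ₖ = (-1)ᵏ/(1-a)ₖ` for `k ≥ 0`. -/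
noncomputable def pochZ (a : ℝ) (k : ℤ) : ℝ :=
  if 0 ≤ k then poch a k.toNat else (-1) ^ (-k).toNat / poch (1 - a) (-k).toNat

/-- The (generally non-terminating) Clausen series `₃F₂(a,b,c;d,e;1)`. -/
noncomputable def F32 (a b c d e : ℝ) : ℝ :=
  ∑' n : ℕ, poch a n * poch b n * poch c n / (poch d n * poch e n * n.factorial)

/-- A terminating `₃F₂(a,b,c;d,e;1)` summed over `k = 0, …, N`. -/
noncomputable def F32sum (N : ℕ) (a b c d e : ℝ) : ℝ :=
  ∑ k ∈ Finset.range (N + 1),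
    poch a k * poch b k * poch c k / (poch d k * poch e k * k.factorial)

/-- The Kummer confluent hypergeometric function `₁F₁(a;b;x)`. -/
noncomputable def F11 (a b x : ℝ) : ℝ :=
  ∑' n : ℕ, poch a n * x ^ n / (poch b n * n.factorial)

lemma poch_zero (a : ℝ) : poch a 0 = 1 := by simp [poch]

lemma poch_succ (a : ℝ) (n : ℕ) : poch a (n+1) = poch a n * (a + n) := by
  simp [poch, ascPochhammer_succ_eval]

lemma poch_succ_left (a : ℝ) (n : ℕ) : poch a (n+1) = a * poch (a+1) n := by
  simp [poch, ascPochhammer_succ_left, Polynomial.eval_comp]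

lemma poch_ne_zero {b : ℝ} (hb : ∀ m : ℕ, b + m ≠ 0) (n : ℕ) : poch b n ≠ 0 := by
  induction n with
  | zero => simp [poch_zero]
  | succ n ih => rw [poch_succ]; exact mul_ne_zero ih (hb n)

lemma poch_shift (γ : ℝ) (m l : ℕ) :
    poch (γ - m) (m + l) = (-1)^m * poch (1-γ) m * poch γ l := by
  induction m with
  | zero => simp [poch_zero]
  | succ m ih =>
    have h1 : (m+1) + l = ((m+l)+1) := by omega
    rw [h1, poch_succ_left]
    have h2 : γ - ((m:ℕ)+1:ℕ) + 1 = γ - m := by push_cast; ring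
    have h3 : (γ : ℝ) - ((m:ℕ)+1:ℕ) = -(1 - γ + m) := by push_cast; ring
    rw [h2, ih, h3, poch_succ (1-γ) m]
    push_cast
    ring

lemma aux_neg (x d : ℝ) (i : ℕ) : x * (-1:ℝ)^i / d = x / ((-1)^i * d) := by
  rcases Nat.even_or_odd i with h | h
  · rw [h.neg_one_pow]; ring
  · rw [h.neg_one_pow]; ring

/-- nonzeroness of shifted pochhammers of a non-integer -/
lemma poch_gamma_sub_ne_zero {γ : ℝ} (hγ : ∀ k : ℤ, γ ≠ (k:ℝ)) (i len : ℕ) :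
    poch (γ - i) len ≠ 0 :=
  poch_ne_zero (fun m h => hγ ((i:ℤ) - m) (by push_cast; linarith)) len

noncomputable def Tterm (α γ : ℝ) (n i : ℕ) : ℝ :=
  poch α (n+1-i) * poch (1-α) i / (poch (γ - i) (n+1) * ((n+1-i).factorial * i.factorial))

noncomputable def aterm (α γ : ℝ) (n j : ℕ) : ℝ :=
  poch (1-α) j * poch α (n-j) / (j.factorial * (n-j).factorial) *
    ((↑(n-j) + α)/(↑n+1)) * (poch (γ - j) (n+1))⁻¹

noncomputable def bterm (α γ : ℝ) (n j : ℕ) : ℝ :=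
  poch (1-α) j * poch α (n-j) / (j.factorial * (n-j).factorial) *
    ((↑j+1-α)/(↑n+1)) * (poch (γ - (↑(j+1):ℕ)) (n+1))⁻¹

lemma partial_frac {γ : ℝ} (hγ : ∀ k : ℤ, γ ≠ (k:ℝ)) (α : ℝ) (j m : ℕ) :
    (γ - α) / poch (γ - (↑(j+1):ℕ)) ((j+m)+2)
      = ((↑m + α)/(↑(j+m)+1)) * (poch (γ - (j:ℕ)) ((j+m)+1))⁻¹
      + ((↑j+1-α)/(↑(j+m)+1)) * (poch (γ - (↑(j+1):ℕ)) ((j+m)+1))⁻¹ := by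
  set N : ℕ := (j+m)+1 with hN
  have hx0 : γ - ((j:ℕ)+1:ℕ) ≠ 0 := fun h => hγ ((j:ℤ)+1) (by push_cast at h ⊢; linarith)
  have hy0 : γ - ((j:ℕ)+1:ℕ) + N ≠ 0 := fun h => hγ ((j:ℤ)+1-(N:ℤ)) (by push_cast at h ⊢; linarith)
  have hA : poch (γ - (j:ℕ)) N ≠ 0 := poch_gamma_sub_ne_zero hγ j N
  have hB : poch (γ - (↑(j+1):ℕ)) N ≠ 0 := poch_gamma_sub_ne_zero hγ (j+1) N
  have hPA : poch (γ - (↑(j+1):ℕ)) (N+1) = (γ - ((j:ℕ)+1:ℕ)) * poch (γ - (j:ℕ)) N := by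
    rw [poch_succ_left]
    congr 1
    push_cast
    ring
  have hPB : poch (γ - (↑(j+1):ℕ)) (N+1) = poch (γ - (↑(j+1):ℕ)) N * (γ - (↑(j+1):ℕ) + N) := by
    rw [poch_succ]
  have hA' : (poch (γ - (j:ℕ)) N)⁻¹ = (γ - ((j:ℕ)+1:ℕ)) * (poch (γ - (↑(j+1):ℕ)) (N+1))⁻¹ := by
    rw [hPA, mul_inv, ← mul_assoc, mul_inv_cancel₀ hx0, one_mul]
  have hB' : (poch (γ - (↑(j+1):ℕ)) N)⁻¹
      = (γ - (↑(j+1):ℕ) + N) * (poch (γ - (↑(j+1):ℕ)) (N+1))⁻¹ := by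
    rw [hPB, mul_inv, mul_comm ((poch (γ - (↑(j+1):ℕ)) N)⁻¹), ← mul_assoc,
      mul_inv_cancel₀ hy0, one_mul]
  have hNc : ((j:ℝ)+(m:ℝ))+1 ≠ 0 := by positivity
  have hs : ((↑m + α)/(↑(j+m)+1)) * (γ - ((j:ℕ)+1:ℕ))
      + ((↑j+1-α)/(↑(j+m)+1)) * (γ - (↑(j+1):ℕ) + N) = γ - α := by
    have hNcast : ((N:ℕ):ℝ) = (j:ℝ) + m + 1 := by rw [hN]; push_cast; ring
    rw [hNcast]
    push_cast
    field_simp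
    ring
  have hgoal : (γ - α) / poch (γ - (↑(j+1):ℕ)) (N+1)
      = (γ - α) * (poch (γ - (↑(j+1):ℕ)) (N+1))⁻¹ := div_eq_mul_inv _ _
  rw [show (j+m)+2 = N+1 from rfl, hgoal, hA', hB']
  linear_combination (poch (γ - (↑(j+1):ℕ)) (N+1))⁻¹ * hs.symm

lemma T_zero (α γ : ℝ) (hγ : ∀ k : ℤ, γ ≠ (k:ℝ)) (n : ℕ) :
    Tterm α γ n 0 = aterm α γ n 0 := by
  unfold Tterm aterm
  have hP : poch (γ - (0:ℕ)) (n+1) ≠ 0 := poch_gamma_sub_ne_zero hγ 0 (n+1)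
  simp only [Nat.sub_zero, Nat.cast_zero, poch_zero, Nat.factorial_zero, Nat.cast_one,
    Nat.factorial_succ]
  rw [poch_succ]
  have h1 : ((n:ℝ)+1) ≠ 0 := by positivity
  have h2 : ((n.factorial:ℝ)) ≠ 0 := Nat.cast_ne_zero.mpr n.factorial_ne_zero
  field_simp
  push_cast
  ring

lemma T_top (α γ : ℝ) (hγ : ∀ k : ℤ, γ ≠ (k:ℝ)) (n : ℕ) :
    Tterm α γ n (n+1) = bterm α γ n n := by
  unfold Tterm bterm
  set P := poch (γ - (↑(n+1):ℕ)) (n+1) with hPdef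
  have hP : P ≠ 0 := poch_gamma_sub_ne_zero hγ (n+1) (n+1)
  rw [show n+1-(n+1) = 0 from by omega, show n-n = 0 from by omega, poch_zero,
    poch_succ (1-α) n, Nat.factorial_succ]
  have h1 : ((n:ℝ)+1) ≠ 0 := by positivity
  have h2 : ((n.factorial:ℝ)) ≠ 0 := Nat.cast_ne_zero.mpr n.factorial_ne_zero
  push_cast
  field_simp
  ring

lemma T_mid (α γ : ℝ) (hγ : ∀ k : ℤ, γ ≠ (k:ℝ)) (j m : ℕ) :
    Tterm α γ (j+m+1) (j+1) = aterm α γ (j+m+1) (j+1) + bterm α γ (j+m+1) j := by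
  unfold Tterm aterm bterm
  have hP : poch (γ - (↑(j+1):ℕ)) ((j+m+1)+1) ≠ 0 := poch_gamma_sub_ne_zero hγ (j+1) (j+m+2)
  set P := poch (γ - (↑(j+1):ℕ)) ((j+m+1)+1) with hPdef
  have hP : P ≠ 0 := poch_gamma_sub_ne_zero hγ (j+1) ((j+m+1)+1)
  rw [show (j+m+1)+1-(j+1) = m+1 from by omega, show (j+m+1)-(j+1) = m from by omega,
    show (j+m+1)-j = m+1 from by omega]
  rw [poch_succ α m, poch_succ (1-α) j, Nat.factorial_succ j, Nat.factorial_succ m]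
  have h2 : ((j.factorial:ℝ)) ≠ 0 := Nat.cast_ne_zero.mpr j.factorial_ne_zero
  have h3 : ((m.factorial:ℝ)) ≠ 0 := Nat.cast_ne_zero.mpr m.factorial_ne_zero
  push_cast
  have h1 : ((j:ℝ)+(m:ℝ)+1+1) ≠ 0 := by positivity
  field_simp
  ring

lemma step1_term (α γ : ℝ) (i l : ℕ) :
    poch α l * poch (1-α) i * (-1:ℝ)^i /
        (poch γ l * poch (1-γ) i * l.factorial * i.factorial)
      = poch α l * poch (1-α) i / (poch (γ - i) (i+l) * ((l.factorial:ℝ) * i.factorial)) := by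
  rw [aux_neg, poch_shift]
  ring_nf

lemma step2_term (α γ : ℝ) (hγ : ∀ k : ℤ, γ ≠ (k:ℝ)) (j m : ℕ) :
    (γ-α)/(γ*(γ-1)) * (poch (1-α) j * (-1:ℝ)^j * poch α m /
        (poch (2-γ) j * j.factorial * poch (γ+1) m * m.factorial))
      = (poch (1-α) j * poch α m / ((j.factorial:ℝ) * m.factorial)) *
          ((γ - α) / poch (γ - (↑(j+1):ℕ)) ((j+m)+2)) := by
  have hsh : poch (γ - (↑(j+1):ℕ)) ((j+m)+2)
      = (-1:ℝ)^(j+1) * poch (1-γ) (j+1) * poch γ (m+1) := by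
    have := poch_shift γ (j+1) (m+1)
    rw [show (j+1)+(m+1) = (j+m)+2 from by omega] at this
    exact this
  have e1 : poch (1-γ) (j+1) = (1-γ) * poch (2-γ) j := by
    rw [poch_succ_left, show (1:ℝ)-γ+1 = 2-γ from by ring]
  have e2 : poch γ (m+1) = γ * poch (γ+1) m := poch_succ_left γ m
  have hγ0 : γ ≠ 0 := fun h => hγ 0 (by push_cast; linarith)
  have hγ1 : γ - 1 ≠ 0 := fun h => hγ 1 (by push_cast; linarith)
  have h2γ : poch (2-γ) j ≠ 0 :=
    poch_ne_zero (fun k h => hγ (k+2) (by push_cast; linarith)) j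
  have hγp : poch (γ+1) m ≠ 0 :=
    poch_ne_zero (fun k h => hγ (-(k:ℤ)-1) (by push_cast; linarith)) m
  have h1γ : (1-γ) ≠ 0 := fun h => hγ 1 (by push_cast; linarith)
  have h2 : ((j.factorial:ℝ)) ≠ 0 := Nat.cast_ne_zero.mpr j.factorial_ne_zero
  have h3 : ((m.factorial:ℝ)) ≠ 0 := Nat.cast_ne_zero.mpr m.factorial_ne_zero
  rw [hsh, e1, e2, pow_succ]
  rcases Nat.even_or_odd j with h | h
  · rw [h.neg_one_pow]; field_simp; ring
  · rw [h.neg_one_pow]; field_simp; ring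



lemma key (α γ : ℝ) (hγ : ∀ k : ℤ, γ ≠ (k:ℝ)) (n : ℕ) :
    ∑ k ∈ range (n+2), poch α k * poch (1-α) (n+1-k) * (-1:ℝ)^(n+1-k) /
        (poch γ k * poch (1-γ) (n+1-k) * (k.factorial:ℝ) * ((n+1-k).factorial:ℝ))
      = (γ-α)/(γ*(γ-1)) * ∑ j ∈ range (n+1),
          poch (1-α) j * (-1:ℝ)^j * poch α (n-j) /
            (poch (2-γ) j * (j.factorial:ℝ) * poch (γ+1) (n-j) * ((n-j).factorial:ℝ)) := by
  have calc1 : ∑ k ∈ range (n+2), poch α k * poch (1-α) (n+1-k) * (-1:ℝ)^(n+1-k) /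
        (poch γ k * poch (1-γ) (n+1-k) * (k.factorial:ℝ) * ((n+1-k).factorial:ℝ))
      = ∑ i ∈ range (n+2), Tterm α γ n i := by
    rw [← Finset.sum_range_reflect (fun i => Tterm α γ n i) (n+2)]
    apply Finset.sum_congr rfl
    intro k hk
    simp only [Finset.mem_range] at hk
    obtain ⟨l, hl⟩ : ∃ l, n+1 = k + l := ⟨n+1-k, by omega⟩
    have h1 : n+2-1-k = l := by omega
    have h2 : n+1-k = l := by omega
    rw [h1, h2]
    unfold Tterm
    rw [show n+1-l = k from by omega, show n+1 = l + k from by omega]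
    exact step1_term α γ l k
  have calc2 : ∑ i ∈ range (n+2), Tterm α γ n i
      = ∑ j ∈ range (n+1), (aterm α γ n j + bterm α γ n j) := by
    have hsplit : ∀ i ∈ range (n+2), Tterm α γ n i
        = (if i ≤ n then aterm α γ n i else 0)
          + (if i = 0 then 0 else bterm α γ n (i-1)) := by
      intro i hi
      simp only [Finset.mem_range] at hi
      rcases Nat.eq_zero_or_pos i with h0 | hpos
      · subst h0
        rw [if_pos (Nat.zero_le n), if_pos rfl, add_zero]
        exact T_zero α γ hγ n
      · obtain ⟨j, rfl⟩ : ∃ j, i = j+1 := ⟨i-1, by omega⟩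
        by_cases hj : j+1 ≤ n
        · obtain ⟨m, rfl⟩ : ∃ m, n = j+m+1 := ⟨n-j-1, by omega⟩
          rw [if_pos hj, if_neg (Nat.succ_ne_zero j), Nat.succ_sub_one]
          exact T_mid α γ hγ j m
        · have hjn : j = n := by omega
          subst hjn
          rw [if_neg (by omega), if_neg (Nat.succ_ne_zero j), Nat.succ_sub_one, zero_add]
          exact T_top α γ hγ j
    have hA : ∑ i ∈ range (n+2), (if i ≤ n then aterm α γ n i else 0)
        = ∑ j ∈ range (n+1), aterm α γ n j := by
      rw [Finset.sum_range_succ, if_neg (by omega), add_zero]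
      exact Finset.sum_congr rfl
        (fun i hi => if_pos (by simp only [Finset.mem_range] at hi; omega))
    have hB : ∑ i ∈ range (n+2), (if i = 0 then 0 else bterm α γ n (i-1))
        = ∑ j ∈ range (n+1), bterm α γ n j := by
      rw [Finset.sum_range_succ']
      simp
    rw [Finset.sum_congr rfl hsplit, Finset.sum_add_distrib, hA, hB,
      ← Finset.sum_add_distrib]
  have calc3 : ∑ j ∈ range (n+1), (aterm α γ n j + bterm α γ n j)
      = (γ-α)/(γ*(γ-1)) * ∑ j ∈ range (n+1),
          poch (1-α) j * (-1:ℝ)^j * poch α (n-j) /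
            (poch (2-γ) j * (j.factorial:ℝ) * poch (γ+1) (n-j) * ((n-j).factorial:ℝ)) := by
    rw [Finset.mul_sum]
    apply Finset.sum_congr rfl
    intro j hj
    simp only [Finset.mem_range] at hj
    obtain ⟨m, rfl⟩ : ∃ m, n = j + m := ⟨n-j, by omega⟩
    rw [show j+m-j = m from by omega, step2_term α γ hγ j m]
    unfold aterm bterm
    rw [show j+m-j = m from by omega, partial_frac hγ α j m]
    push_cast
    ring
  rw [calc1, calc2, calc3]

lemma F11_summable_norm (a b x : ℝ) (hb : ∀ m : ℕ, b + (m:ℝ) ≠ 0) :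
    Summable (fun n : ℕ => ‖poch a n * x ^ n / (poch b n * n.factorial)‖) := by
  rw [summable_norm_iff]
  apply summable_of_ratio_norm_eventually_le (r := 1/2) (by norm_num)
  have hstep : ∀ n : ℕ, poch a (n+1) * x ^ (n+1) / (poch b (n+1) * (n+1).factorial)
      = (poch a n * x ^ n / (poch b n * n.factorial)) * ((a+n)*x/((b+n)*(n+1))) := by
    intro n
    have hq : poch b n ≠ 0 := poch_ne_zero hb n
    have hbn : b + (n:ℝ) ≠ 0 := hb n
    have hf : ((n.factorial:ℕ):ℝ) ≠ 0 := Nat.cast_ne_zero.mpr n.factorial_ne_zero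
    have hn1 : ((n:ℝ)+1) ≠ 0 := by positivity
    rw [poch_succ, poch_succ, pow_succ, Nat.factorial_succ]
    push_cast
    field_simp
  rw [Filter.eventually_atTop]
  set R : ℝ := (2*(abs b)+1) + 4*(abs x)*((abs a)+1) with hRdef
  refine ⟨⌈R⌉₊, fun n hn => ?_⟩
  have hn' : (2*(abs b)+1) + 4*(abs x)*((abs a)+1) ≤ (n:ℝ) :=
    le_trans (Nat.le_ceil _) (Nat.cast_le.mpr hn)
  rw [hstep n, norm_mul]
  rw [mul_comm (1/2 : ℝ)]
  refine mul_le_mul_of_nonneg_left ?_ (norm_nonneg _)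
  have habs : ∀ y : ℝ, ‖y‖ = |y| := fun y => rfl
  rw [norm_div, norm_mul, norm_mul, habs, habs, habs, habs]
  have h1 : |a + (n:ℝ)| ≤ |a| + n := by
    calc |a + (n:ℝ)| ≤ |a| + |(n:ℝ)| := abs_add_le _ _
    _ = |a| + n := by rw [abs_of_nonneg (show (0:ℝ) ≤ (n:ℝ) by positivity)]
  have h2 : (n:ℝ) - |b| ≤ |b + n| := by
    have h := abs_sub_abs_le_abs_sub (n:ℝ) (-b)
    simp only [sub_neg_eq_add, abs_neg] at h
    rw [abs_of_nonneg (show (0:ℝ) ≤ (n:ℝ) by positivity)] at h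
    rw [add_comm b (n:ℝ)]
    exact h
  have h3 : |(n:ℝ) + 1| = (n:ℝ) + 1 := abs_of_nonneg (by positivity)
  rw [h3]
  have hbpos : (0:ℝ) < |b + n| := by
    have : (0:ℝ) ≤ |b| := abs_nonneg b
    have : (1:ℝ) ≤ (n:ℝ) - |b| := by nlinarith [abs_nonneg x, abs_nonneg a]
    linarith
  rw [div_le_iff₀ (by positivity)]
  have hx : (0:ℝ) ≤ |x| := abs_nonneg x
  have ha : (0:ℝ) ≤ |a| := abs_nonneg a
  have hb' : (0:ℝ) ≤ |b| := abs_nonneg b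
  have hnn : (0:ℝ) ≤ (n:ℝ) := Nat.cast_nonneg n
  have key1 : |a + (n:ℝ)| * |x| ≤ (|a| + n) * |x| :=
    mul_le_mul_of_nonneg_right h1 hx
  have key2 : ((n:ℝ) - |b|) * ((n:ℝ)+1) ≤ |b + n| * ((n:ℝ)+1) :=
    mul_le_mul_of_nonneg_right h2 (by positivity)
  nlinarith [key1, key2, mul_le_mul_of_nonneg_right hn' hx,
    mul_nonneg (mul_nonneg hx ha) hnn, mul_nonneg hx hnn, sq_nonneg ((n:ℝ)+1),
    mul_nonneg hx ha, mul_nonneg hb' hnn]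


theorem Kummer_example2 (α γ : ℝ) (hγ : ∀ k : ℤ, γ ≠ (k : ℝ)) (t : ℝ) :
    F11 α γ t * F11 (1 - α) (1 - γ) (-t) -
      (γ - α) * t / (γ * (γ - 1)) * F11 (1 - α) (2 - γ) (-t) * F11 α (γ + 1) t = 1 := by
  have h1b : ∀ m : ℕ, γ + (m:ℝ) ≠ 0 := fun m h => hγ (-(m:ℤ)) (by push_cast; linarith)
  have h2b : ∀ m : ℕ, (1-γ) + (m:ℝ) ≠ 0 := fun m h => hγ ((m:ℤ)+1) (by push_cast; linarith)
  have h3b : ∀ m : ℕ, (2-γ) + (m:ℝ) ≠ 0 := fun m h => hγ ((m:ℤ)+2) (by push_cast; linarith)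
  have h4b : ∀ m : ℕ, (γ+1) + (m:ℝ) ≠ 0 := fun m h => hγ (-(m:ℤ)-1) (by push_cast; linarith)
  have S1 := F11_summable_norm α γ t h1b
  have S2 := F11_summable_norm (1-α) (1-γ) (-t) h2b
  have S3 := F11_summable_norm (1-α) (2-γ) (-t) h3b
  have S4 := F11_summable_norm α (γ+1) t h4b
  have hPsum : Summable (fun n : ℕ => ∑ k ∈ Finset.range (n+1),
      (poch α k * t ^ k / (poch γ k * k.factorial)) *
      (poch (1-α) (n-k) * (-t) ^ (n-k) / (poch (1-γ) (n-k) * (n-k).factorial))) :=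
    (summable_norm_sum_mul_range_of_summable_norm S1 S2).of_norm
  unfold F11
  rw [mul_assoc ((γ - α) * t / (γ * (γ - 1)))]
  rw [tsum_mul_tsum_eq_tsum_sum_range_of_summable_norm S1 S2,
      tsum_mul_tsum_eq_tsum_sum_range_of_summable_norm S3 S4]
  rw [hPsum.tsum_eq_zero_add, ← tsum_mul_left]
  have hP0 : ∑ k ∈ Finset.range (0+1),
      (poch α k * t ^ k / (poch γ k * k.factorial)) *
      (poch (1-α) (0-k) * (-t) ^ (0-k) / (poch (1-γ) (0-k) * (0-k).factorial)) = 1 := by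
    simp [poch_zero]
  have hterm : ∀ n : ℕ, (∑ k ∈ Finset.range ((n+1)+1),
      (poch α k * t ^ k / (poch γ k * k.factorial)) *
      (poch (1-α) ((n+1)-k) * (-t) ^ ((n+1)-k) / (poch (1-γ) ((n+1)-k) * ((n+1)-k).factorial)))
      = (γ - α) * t / (γ * (γ - 1)) * ∑ k ∈ Finset.range (n+1),
      (poch (1-α) k * (-t) ^ k / (poch (2-γ) k * k.factorial)) *
      (poch α (n-k) * t ^ (n-k) / (poch (γ+1) (n-k) * (n-k).factorial)) := by
    intro n
    have e1 : (∑ k ∈ Finset.range ((n+1)+1),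
        (poch α k * t ^ k / (poch γ k * k.factorial)) *
        (poch (1-α) ((n+1)-k) * (-t) ^ ((n+1)-k) / (poch (1-γ) ((n+1)-k) * ((n+1)-k).factorial)))
        = t^(n+1) * ∑ k ∈ Finset.range (n+2),
            poch α k * poch (1-α) (n+1-k) * (-1:ℝ)^(n+1-k) /
              (poch γ k * poch (1-γ) (n+1-k) * (k.factorial:ℝ) * ((n+1-k).factorial:ℝ)) := by
      rw [Finset.mul_sum]
      apply Finset.sum_congr rfl
      intro k hk
      simp only [Finset.mem_range] at hk
      obtain ⟨l, hl⟩ : ∃ l, n+1 = k + l := ⟨n+1-k, by omega⟩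
      rw [show n+1-k = l from by omega, show (-t)^l = (-1:ℝ)^l * t^l from by rw [neg_pow],
        show n+1 = k+l from hl, pow_add]
      ring
    have e2 : (∑ k ∈ Finset.range (n+1),
        (poch (1-α) k * (-t) ^ k / (poch (2-γ) k * k.factorial)) *
        (poch α (n-k) * t ^ (n-k) / (poch (γ+1) (n-k) * (n-k).factorial)))
        = t^n * ∑ j ∈ Finset.range (n+1),
            poch (1-α) j * (-1:ℝ)^j * poch α (n-j) /
              (poch (2-γ) j * (j.factorial:ℝ) * poch (γ+1) (n-j) * ((n-j).factorial:ℝ)) := by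
      rw [Finset.mul_sum]
      apply Finset.sum_congr rfl
      intro k hk
      simp only [Finset.mem_range] at hk
      obtain ⟨l, hl⟩ : ∃ l, n = k + l := ⟨n-k, by omega⟩
      rw [show n-k = l from by omega, show (-t)^k = (-1:ℝ)^k * t^k from by rw [neg_pow],
        show n = k+l from hl, pow_add]
      ring
    rw [e1, key α γ hγ n, e2]
    ring
  rw [tsum_congr hterm, hP0]
  ring
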